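/- Let A be the graded vector space over a field K with A_0 = K·1, A_1 = K·x ⊕ K·y, A_2 = K·X ⊕ K·Y, A_3 = K·ξ, and zero otherwise. Define m_2 by: 1 is a two-sided unit; m_2(x,X) = -ξ = m_2(y,Y); m_2(X,x) = ξ = m_2(Y,y); m_2(x,x) = λ_{30}X + λ_{21}Y, m_2(x,y) = m_2(y,x) = λ_{21}X + λ_{12}Y, m_2(y,y) = λ_{12}X + λ_{03}Y; and all other products of basis elements in positive degrees are zero. Then m_2 is associative on A; i.e., (A, m_2) is a graded associative unital algebra. -/

import Mathlib

noncomputable section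

/-- Basis elements of the graded vector space `A = A₀ ⊕ A₁ ⊕ A₂ ⊕ A₃`. -/
inductive Bas | one | x | y | X | Y | xi
deriving DecidableEq

/-- Degrees of the basis elements. -/
def deg : Bas → ℕ
  | .one => 0
  | .x => 1
  | .y => 1
  | .X => 2
  | .Y => 2
  | .xi => 3

/-- The underlying vector space, with basis `Bas`. -/
abbrev V (K : Type*) [Field K] := Bas →₀ K

variable (K : Type*) [Field K]

/-- Basis vectors. -/
def e (b : Bas) : V K := Finsupp.single b 1

/-- The product `m₂` on basis elements: `1` is a two-sided unit;
`m₂(x,X) = -ξ = m₂(y,Y)`, `m₂(X,x) = ξ = m₂(Y,y)`;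
`m₂(x,x) = λ₃₀X + λ₂₁Y`, `m₂(x,y) = m₂(y,x) = λ₂₁X + λ₁₂Y`,
`m₂(y,y) = λ₁₂X + λ₀₃Y`; all other products of basis elements of positive degree
vanish. -/
def mu (l30 l21 l12 l03 : K) : Bas → Bas → V K
  | .one, b => e K b
  | a, .one => e K a
  | .x, .x => l30 • e K .X + l21 • e K .Y
  | .x, .y => l21 • e K .X + l12 • e K .Y
  | .y, .x => l21 • e K .X + l12 • e K .Y
  | .y, .y => l12 • e K .X + l03 • e K .Y
  | .x, .X => -(e K .xi)
  | .y, .Y => -(e K .xi)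
  | .X, .x => e K .xi
  | .Y, .y => e K .xi
  | _, _ => 0

/-- The bilinear extension of `mu` to `V`. -/
def m2 (l30 l21 l12 l03 : K) : V K →ₗ[K] V K →ₗ[K] V K :=
  Finsupp.lsum K fun a =>
    LinearMap.toSpanSingleton K (V K →ₗ[K] V K)
      (Finsupp.lsum K fun b => LinearMap.toSpanSingleton K (V K) (mu K l30 l21 l12 l03 a b))

lemma m2_e (l30 l21 l12 l03 : K) (a b : Bas) :
    m2 K l30 l21 l12 l03 (e K a) (e K b) = mu K l30 l21 l12 l03 a b := by
  simp [m2, e, Finsupp.lsum_single, LinearMap.toSpanSingleton_apply]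

set_option maxHeartbeats 2000000 in
/-- `1` is a two-sided unit for `m₂`, and on elements of positive degree `m₂`
satisfies the (signed, Koszul-corrected) associativity
`m₂(m₂(a,b),c) = (-1)^{|a|} m₂(a, m₂(b,c))`, which is the A_∞-relation for the
structure with `m_n = 0` for `n ≠ 2`. -/
theorem stmt14 (l30 l21 l12 l03 : K) :
    (∀ v : V K, m2 K l30 l21 l12 l03 (e K .one) v = v ∧
      m2 K l30 l21 l12 l03 v (e K .one) = v) ∧
    (∀ a b c : Bas, 1 ≤ deg a → 1 ≤ deg b → 1 ≤ deg c →
      m2 K l30 l21 l12 l03 (m2 K l30 l21 l12 l03 (e K a) (e K b)) (e K c) =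
        ((-1 : K) ^ deg a) •
          m2 K l30 l21 l12 l03 (e K a) (m2 K l30 l21 l12 l03 (e K b) (e K c))) := by
  constructor
  · intro v
    constructor
    · induction v using Finsupp.induction_linear with
      | zero => simp
      | add f g hf hg => simp [map_add, hf, hg]
      | single b k =>
          have : (Finsupp.single b k : V K) = k • e K b := by
            simp [e, Finsupp.smul_single]
          rw [this, map_smul, m2_e]
          simp [mu]
    · induction v using Finsupp.induction_linear with
      | zero => simp
      | add f g hf hg => simp [map_add, hf, hg]
      | single b k =>
          have : (Finsupp.single b k : V K) = k • e K b := by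
            simp [e, Finsupp.smul_single]
          rw [this, map_smul]
          simp only [LinearMap.smul_apply, m2_e]
          cases b <;> simp [mu]
  · intro a b c ha hb hc
    cases a <;> cases b <;> cases c <;> simp only [deg] at ha hb hc ⊢ <;>
        first
        | omega
        | (simp only [m2_e, mu, map_add, map_smul, map_neg, LinearMap.add_apply,
            LinearMap.smul_apply, LinearMap.neg_apply, map_zero, LinearMap.zero_apply,
            m2_e, smul_zero, smul_add, smul_smul, smul_neg, neg_neg, neg_zero,
            add_zero, zero_add, pow_succ, pow_zero, one_mul, neg_smul, one_smul,
            neg_mul, mul_neg])
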